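/- Let p be a prime and n ≥ 1, let 𝔽 = GaloisField p n, let G = AGL(1,p^n) = 𝔽 ⋊ 𝔽ˣ, and let π : G → 𝔽ˣ be the canonical projection. For a proper subgroup D of 𝔽ˣ, the subgroup π⁻¹(D) (i.e., 𝔽 ⋊ D) is meet irreducible in G if and only if (p^n − 1)/|D| is a prime power q^t with q prime and t ≥ 1. -/

import Mathlib

/-- A proper subgroup `K` is meet irreducible if whenever `K = A ⊓ B` then
`K = A` or `K = B`. -/
def IsProperMeetIrreducible {G : Type*} [Group G] (K : Subgroup G) : Prop :=
  K ≠ ⊤ ∧ ∀ A B : Subgroup G, K = A ⊓ B → K = A ∨ K = B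

/-- The canonical monoid homomorphism `AddAut A →* MulAut (Multiplicative A)`. -/
def addAutToMulAut (A : Type*) [AddGroup A] : Multiplicative (AddAut A) →* MulAut (Multiplicative A) where
  toFun f := AddEquiv.toMultiplicative (Multiplicative.toAdd f)
  map_one' := rfl
  map_mul' _ _ := rfl

/-- The action of `𝔽ˣ` on the additive group of `𝔽 = GaloisField p n`
by field multiplication, as a map into multiplicative automorphisms. -/
noncomputable def aglAction (p n : ℕ) [Fact p.Prime] :
    (GaloisField p n)ˣ →* MulAut (Multiplicative (GaloisField p n)) :=
  (addAutToMulAut _).comp (DistribMulAction.toAddAut (GaloisField p n)ˣ (GaloisField p n))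

/-- `AGL(1, p^n) = 𝔽 ⋊ 𝔽ˣ`, the affine general linear group of degree one
over the field with `p ^ n` elements. -/
noncomputable abbrev AGL1 (p n : ℕ) [Fact p.Prime] : Type :=
  Multiplicative (GaloisField p n) ⋊[aglAction p n] (GaloisField p n)ˣ

open Subgroup

section CyclicLattice

variable {G : Type*} [Group G] [Finite G] [IsCyclic G]

lemma pow_card_subgroup_eq_one {H : Subgroup G} {x : G} (hx : x ∈ H) :
    x ^ Nat.card H = 1 := by
  have h : (⟨x, hx⟩ : H) ^ Nat.card H = 1 := pow_card_eq_one'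
  have h2 : (((⟨x, hx⟩ : H) ^ Nat.card H : H) : G) = ((1 : H) : G) := congrArg _ h
  rwa [SubmonoidClass.coe_pow, OneMemClass.coe_one] at h2

lemma mem_zpowers_of_pow_eq_one {g : G} (hg : ∀ x, x ∈ zpowers g) {d : ℕ}
    (hd : d ∣ Nat.card G) {x : G} (hx : x ^ d = 1) :
    x ∈ zpowers (g ^ (Nat.card G / d)) := by
  have hN : 0 < Nat.card G := Nat.card_pos
  have hd0 : 0 < d := Nat.pos_of_dvd_of_pos hd hN
  obtain ⟨m, hm⟩ := hg x
  have hm' : g ^ m = x := hm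
  have h1 : g ^ (m * (d : ℤ)) = 1 := by rw [zpow_mul, hm', zpow_natCast, hx]
  have h2 : (orderOf g : ℤ) ∣ m * d := orderOf_dvd_iff_zpow_eq_one.mpr h1
  rw [orderOf_eq_card_of_forall_mem_zpowers hg] at h2
  obtain ⟨c, hc⟩ := hd
  have h3 : (c : ℤ) ∣ m := by
    have h4 : (c : ℤ) * d ∣ m * d := by
      rw [hc] at h2; push_cast at h2; rwa [mul_comm (d : ℤ) c] at h2
    exact (mul_dvd_mul_iff_right (by exact_mod_cast hd0.ne' : (d : ℤ) ≠ 0)).mp h4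
  obtain ⟨j, hj⟩ := h3
  refine ⟨j, ?_⟩
  have hcd : Nat.card G / d = c := by rw [hc, Nat.mul_div_cancel_left _ hd0]
  show (g ^ (Nat.card G / d)) ^ j = x
  rw [hcd, ← zpow_natCast g c, ← zpow_mul, ← hj, hm']

lemma card_zpowers_pow_div {g : G} (hg : ∀ x, x ∈ zpowers g) {d : ℕ}
    (hd : d ∣ Nat.card G) :
    Nat.card (zpowers (g ^ (Nat.card G / d))) = d := by
  have hN : 0 < Nat.card G := Nat.card_pos
  have hd0 : 0 < d := Nat.pos_of_dvd_of_pos hd hN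
  rw [Nat.card_zpowers, orderOf_pow, orderOf_eq_card_of_forall_mem_zpowers hg,
    Nat.gcd_eq_right (Nat.div_dvd_of_dvd hd), Nat.div_div_self hd hN.ne']

lemma subgroup_eq_zpowers {g : G} (hg : ∀ x, x ∈ zpowers g) (H : Subgroup G) :
    H = zpowers (g ^ (Nat.card G / Nat.card H)) := by
  have hd : Nat.card H ∣ Nat.card G := Subgroup.card_subgroup_dvd_card H
  have hle : H ≤ zpowers (g ^ (Nat.card G / Nat.card H)) := fun x hx =>
    mem_zpowers_of_pow_eq_one hg hd (pow_card_subgroup_eq_one hx)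
  exact Subgroup.eq_of_le_of_card_ge hle (le_of_eq (card_zpowers_pow_div hg hd))

lemma le_of_card_dvd_card {A B : Subgroup G} (h : Nat.card A ∣ Nat.card B) : A ≤ B := by
  obtain ⟨g, hg⟩ := IsCyclic.exists_generator (α := G)
  have hB := subgroup_eq_zpowers hg B
  intro x hx
  rw [hB]
  refine mem_zpowers_of_pow_eq_one hg (Subgroup.card_subgroup_dvd_card B) ?_
  obtain ⟨c, hc⟩ := h
  rw [hc, pow_mul, pow_card_subgroup_eq_one hx, one_pow]

lemma exists_subgroup_card_eq {d : ℕ} (hd : d ∣ Nat.card G) :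
    ∃ H : Subgroup G, Nat.card H = d := by
  obtain ⟨g, hg⟩ := IsCyclic.exists_generator (α := G)
  exact ⟨_, card_zpowers_pow_div hg hd⟩

lemma card_inf_eq_gcd (A B : Subgroup G) :
    Nat.card (A ⊓ B : Subgroup G) = Nat.gcd (Nat.card A) (Nat.card B) := by
  refine Nat.dvd_antisymm
    (Nat.dvd_gcd (Subgroup.card_dvd_of_le inf_le_left)
      (Subgroup.card_dvd_of_le inf_le_right)) ?_
  obtain ⟨C, hC⟩ := exists_subgroup_card_eq (G := G)
    ((Nat.gcd_dvd_left (Nat.card A) (Nat.card B)).trans (Subgroup.card_subgroup_dvd_card A))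
  have hCA : C ≤ A := le_of_card_dvd_card (by rw [hC]; exact Nat.gcd_dvd_left _ _)
  have hCB : C ≤ B := le_of_card_dvd_card (by rw [hC]; exact Nat.gcd_dvd_right _ _)
  rw [← hC]
  exact Subgroup.card_dvd_of_le (le_inf hCA hCB)

set_option maxHeartbeats 1000000 in
theorem cyclic_meetIrr_iff (D : Subgroup G) (hD : D ≠ ⊤) :
    (∀ A B : Subgroup G, D = A ⊓ B → D = A ∨ D = B) ↔ IsPrimePow D.index := by
  have hN : 0 < Nat.card G := Nat.card_pos
  have hd0 : 0 < Nat.card D := Nat.card_pos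
  have hcmi : Nat.card D * D.index = Nat.card G := Subgroup.card_mul_index D
  have hk0 : D.index ≠ 0 := fun h => by simp [h] at hcmi; omega
  have hk1 : D.index ≠ 1 := fun h => hD (Subgroup.index_eq_one.mp h)
  constructor
  · intro h
    by_contra hk
    set k := D.index with hkdef
    set q := k.minFac with hqdef
    have hq : q.Prime := Nat.minFac_prime hk1
    set v := k.factorization q with hvdef
    set s := q ^ v with hsdef
    set m := k / s with hmdef
    have hsm : s * m = k := Nat.ordProj_mul_ordCompl_eq_self k q
    have hv0 : 0 < v := hq.factorization_pos_of_dvd hk0 k.minFac_dvd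
    have hs1 : 1 < s := Nat.one_lt_pow hv0.ne' hq.one_lt
    have hm1 : 1 < m := by
      rcases Nat.lt_or_ge m 2 with hm | hm
      · interval_cases m
        · omega
        · exact absurd ⟨q, v, hq.prime, hv0, by omega⟩ hk
      · exact hm
    have hcop : Nat.Coprime m s := ((Nat.coprime_ordCompl hq hk0).pow_left v).symm
    have haN : Nat.card D * m ∣ Nat.card G := by
      rw [← hcmi, ← hsm]
      exact ⟨s, by ring⟩
    have hbN : Nat.card D * s ∣ Nat.card G := by
      rw [← hcmi, ← hsm]
      exact ⟨m, by ring⟩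
    obtain ⟨A, hA⟩ := exists_subgroup_card_eq haN
    obtain ⟨B, hB⟩ := exists_subgroup_card_eq hbN
    have hDA : D ≤ A := le_of_card_dvd_card (by rw [hA]; exact Dvd.intro m rfl)
    have hDB : D ≤ B := le_of_card_dvd_card (by rw [hB]; exact Dvd.intro s rfl)
    have hinfcard : Nat.card (A ⊓ B : Subgroup G) = Nat.card D := by
      rw [card_inf_eq_gcd, hA, hB, Nat.gcd_mul_left, hcop.gcd_eq_one, mul_one]
    have hinf : D = A ⊓ B :=
      Subgroup.eq_of_le_of_card_ge (le_inf hDA hDB) (le_of_eq hinfcard)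
    rcases h A B hinf with hEq | hEq
    · have : Nat.card D = Nat.card D * m := by rw [← hA, ← hEq]
      nlinarith
    · have : Nat.card D = Nat.card D * s := by rw [← hB, ← hEq]
      nlinarith
  · rintro ⟨q, t, hq, ht, hk⟩
    replace hq : q.Prime := Nat.prime_iff.mpr hq
    intro A B hDAB
    have hDA : D ≤ A := hDAB ▸ inf_le_left
    have hDB : D ≤ B := hDAB ▸ inf_le_right
    have hgcd : Nat.card D = Nat.gcd (Nat.card A) (Nat.card B) := by
      rw [hDAB, card_inf_eq_gcd]
    obtain ⟨i, hi, hiA⟩ := (Nat.dvd_prime_pow hq).mp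
      (hk ▸ Subgroup.index_dvd_of_le hDA)
    obtain ⟨j, hj, hjB⟩ := (Nat.dvd_prime_pow hq).mp
      (hk ▸ Subgroup.index_dvd_of_le hDB)
    have hcA : Nat.card A * A.index = Nat.card G := Subgroup.card_mul_index A
    have hcB : Nat.card B * B.index = Nat.card G := Subgroup.card_mul_index B
    have key : ∀ (C : Subgroup G), D ≤ C → C.index = q ^ t → D = C := by
      intro C hDC hCt
      have hcC : Nat.card C * C.index = Nat.card G := Subgroup.card_mul_index C
      have : Nat.card C = Nat.card D := by
        rw [hCt, hk] at hcC
        have := hcmi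
        have hkpos : 0 < D.index := Nat.pos_of_ne_zero hk0
        nlinarith
      exact Subgroup.eq_of_le_of_card_ge hDC (le_of_eq this)
    by_cases hit : i = t
    · exact Or.inl (key A hDA (by rw [hiA, hit]))
    by_cases hjt : j = t
    · exact Or.inr (key B hDB (by rw [hjB, hjt]))
    -- both i < t and j < t : derive contradiction
    exfalso
    have hdvd : ∀ (C : Subgroup G) (l : ℕ), C.index = q ^ l → l < t →
        Nat.card D * q ∣ Nat.card C := by
      intro C l hCl hlt
      have hcC : Nat.card C * C.index = Nat.card G := Subgroup.card_mul_index C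
      have hqpow : q * q ^ (t - 1 - l) * q ^ l = q ^ t := by
        have h5 : 1 + (t - 1 - l) + l = t := by omega
        calc q * q ^ (t - 1 - l) * q ^ l = q ^ (1 + (t - 1 - l) + l) := by
              rw [pow_add, pow_add, pow_one]
        _ = q ^ t := by rw [h5]
      have h1 : Nat.card C * q ^ l = (Nat.card D * q * q ^ (t - 1 - l)) * q ^ l := by
        calc Nat.card C * q ^ l = Nat.card G := by rw [← hCl, hcC]
        _ = Nat.card D * q ^ t := by rw [← hcmi, hk]
        _ = (Nat.card D * q * q ^ (t - 1 - l)) * q ^ l := by rw [← hqpow]; ring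
      have h2 : Nat.card C = Nat.card D * q * q ^ (t - 1 - l) :=
        Nat.eq_of_mul_eq_mul_right (pow_pos hq.pos l) h1
      exact ⟨q ^ (t - 1 - l), h2⟩
    have hdA : Nat.card D * q ∣ Nat.card A := hdvd A i hiA (by omega)
    have hdB : Nat.card D * q ∣ Nat.card B := hdvd B j hjB (by omega)
    have hdd := Nat.dvd_gcd hdA hdB
    rw [← hgcd] at hdd
    have hle := Nat.le_of_dvd hd0 hdd
    have hq2 := hq.two_le
    have h6 : Nat.card D * 2 ≤ Nat.card D * q := Nat.mul_le_mul_left _ hq2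
    omega

end CyclicLattice
lemma isProperMeetIrreducible_comap_iff {G H : Type*} [Group G] [Group H]
    (f : G →* H) (hf : Function.Surjective f) (D : Subgroup H) :
    IsProperMeetIrreducible (D.comap f) ↔ IsProperMeetIrreducible D := by
  have hinj : Function.Injective (Subgroup.comap f) := Subgroup.comap_injective hf
  constructor
  · rintro ⟨hne, h⟩
    refine ⟨fun hT => hne (by rw [hT, Subgroup.comap_top]), fun A B hAB => ?_⟩
    have hK : D.comap f = A.comap f ⊓ B.comap f := by
      rw [hAB, Subgroup.comap_inf]
    rcases h _ _ hK with hEq | hEq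
    · exact Or.inl (hinj hEq)
    · exact Or.inr (hinj hEq)
  · rintro ⟨hne, h⟩
    have hker : f.ker ≤ D.comap f := fun x hx => by
      rw [MonoidHom.mem_ker] at hx
      simp only [Subgroup.mem_comap, hx]
      exact one_mem D
    refine ⟨fun hT => hne ?_, fun A B hAB => ?_⟩
    · rw [← Subgroup.comap_top f] at hT
      exact hinj hT
    · have h1 : f.ker ≤ A ⊓ B := by rw [← hAB]; exact hker
      have hA' : Subgroup.comap f (Subgroup.map f A) = A :=
        Subgroup.comap_map_eq_self (h1.trans inf_le_left)
      have hB' : Subgroup.comap f (Subgroup.map f B) = B :=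
        Subgroup.comap_map_eq_self (h1.trans inf_le_right)
      have hD' : D.comap f = Subgroup.comap f (Subgroup.map f A ⊓ Subgroup.map f B) := by
        rw [Subgroup.comap_inf, hA', hB']; exact hAB
      rcases h _ _ (hinj hD') with hEq | hEq
      · exact Or.inl (by rw [hEq, hA'])
      · exact Or.inr (by rw [hEq, hB'])

theorem AGL1_full_kernel_meet_irreducible_iff (p n : ℕ) [Fact p.Prime] (hn : 1 ≤ n)
    (D : Subgroup (GaloisField p n)ˣ) (hD : D ≠ ⊤) :
    IsProperMeetIrreducible
        (D.comap (SemidirectProduct.rightHom :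
          AGL1 p n →* (GaloisField p n)ˣ)) ↔
      ∃ q t : ℕ, q.Prime ∧ 1 ≤ t ∧ (p ^ n - 1) / Nat.card D = q ^ t := by
  have hn0 : n ≠ 0 := by omega
  rw [isProperMeetIrreducible_comap_iff SemidirectProduct.rightHom
    SemidirectProduct.rightHom_surjective D]
  have hcard : Nat.card (GaloisField p n)ˣ = p ^ n - 1 := by
    rw [Nat.card_units, GaloisField.card p n hn0]
  have hd0 : 0 < Nat.card D := Nat.card_pos
  have hidx : (p ^ n - 1) / Nat.card D = D.index := by
    rw [← hcard, ← Subgroup.card_mul_index D, Nat.mul_div_cancel_left _ hd0]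
  rw [hidx]
  unfold IsProperMeetIrreducible
  constructor
  · rintro ⟨-, h⟩
    obtain ⟨q, t, hq, ht, hk⟩ := (cyclic_meetIrr_iff D hD).mp h
    exact ⟨q, t, Nat.prime_iff.mpr hq, ht, hk.symm⟩
  · rintro ⟨q, t, hq, ht, hk⟩
    exact ⟨hD, (cyclic_meetIrr_iff D hD).mpr ⟨q, t, Nat.prime_iff.mp hq, ht, hk.symm⟩⟩
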